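/- Let λ ∈ (0,1) be irrational and let K_λ be the λ-gasket with irrational moving slider. Then K_λ does not satisfy the finite neighboring type property: the set of similitudes of the form h = F_w^{-1}∘F_u with w, u ∈ W_*, F_wK_λ ∩ F_uK_λ ≠ ∅, and similarity ratio c_u/c_w ∈ (c_*, 1/c_*) is infinite. In particular, writing λ = Σ_{i≥1} l_i 3^{-i} with digits l_i ∈ {0,1,2} and λ_k = Σ_{i≥1} l_{i+k} 3^{-i}, for every k ≥ 0 one has F_4F_3^kK_λ ∩ F_3F_{l_1}⋯F_{l_k}K_λ ≠ ∅, and the similitudes (F_3∘F_{l_1}∘⋯∘F_{l_k})^{-1}∘F_4∘F_3^k, k ≥ 0, are pairwise distinct translations. -/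

import Mathlib

open Set

noncomputable section

/-- The IFS of the `λ`-gasket with moving slider: `F_0(x) = x/3`,
`F_1(x) = x/3 + (1/3,0)`, `F_2(x) = x/3 + (2/3,0)`, `F_3(x) = x/3 + (1/3,√3/3)`,
`F_4(x) = x/3 + (1/6 + λ/3, √3/6)`. -/
def Kf (lam : ℝ) : Fin 5 → ℝ × ℝ → ℝ × ℝ := fun i x =>
  (1/3 : ℝ) • x +
    ![((0 : ℝ), (0 : ℝ)), (1/3, 0), (2/3, 0), (1/3, Real.sqrt 3 / 3),
      (1/6 + lam/3, Real.sqrt 3 / 6)] i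

/-- `F_{l_1} ∘ ⋯ ∘ F_{l_k}` (applying `F_{l_k}` first), where `l i` is the digit
`l_{i+1}`. -/
def Fcomp {α : Type*} {N : ℕ} (F : Fin N → α → α) (l : ℕ → Fin N) : ℕ → α → α
  | 0 => id
  | k + 1 => Fcomp F l k ∘ F (l k)

/-- `F_w = F_{w_1} ∘ ⋯ ∘ F_{w_m}` for a word `w = w_1⋯w_m`. -/
def Fword {α : Type*} {N : ℕ} (F : Fin N → α → α) : List (Fin N) → α → α
  | [] => id
  | i :: w => F i ∘ Fword F w

/-- `c_w`, the similarity ratio of `F_w` (here `c_w = 3^{-|w|}`). -/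
def cword {N : ℕ} (c : Fin N → ℝ) (w : List (Fin N)) : ℝ := (w.map c).prod

open Filter Topology

lemma Kf3 (lam : ℝ) (x : ℝ × ℝ) : Kf lam 3 x = (x.1/3 + 1/3, x.2/3 + Real.sqrt 3/3) := by
  simp [Kf, Prod.ext_iff, Prod.smul_fst, Prod.smul_snd, smul_eq_mul]
  constructor <;> ring

lemma Kf4 (lam : ℝ) (x : ℝ × ℝ) :
    Kf lam 4 x = (x.1/3 + (1/6 + lam/3), x.2/3 + Real.sqrt 3/6) := by
  simp [Kf, Prod.ext_iff, Prod.smul_fst, Prod.smul_snd, smul_eq_mul]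
  constructor <;> ring

lemma Kfd (lam : ℝ) (i : Fin 5) (hi : (i:ℕ) ≤ 2) (x : ℝ × ℝ) :
    Kf lam i x = (x.1/3 + ((i:ℕ):ℝ)/3, x.2/3) := by
  fin_cases i <;> simp_all [Kf, Prod.ext_iff, Prod.smul_fst, Prod.smul_snd, smul_eq_mul] <;>
    constructor <;> first | trivial | ring

lemma iter3 (lam : ℝ) (k : ℕ) (x : ℝ × ℝ) :
    (Kf lam 3)^[k] x = (x.1/3^k + (1 - 1/3^k)/2, x.2/3^k + (1 - 1/3^k)*(Real.sqrt 3/2)) := by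
  induction k with
  | zero => simp
  | succ k ih =>
      have h3 : (3:ℝ)^k ≠ 0 := by positivity
      rw [Function.iterate_succ_apply', ih, Kf3, Prod.ext_iff]
      constructor <;> · simp only; field_simp; ring

lemma fcompf (lam : ℝ) (D : ℕ → Fin 5) (hD : ∀ j, (D j : ℕ) ≤ 2) (k : ℕ) (x : ℝ × ℝ) :
    Fcomp (Kf lam) D k x =
      (x.1/3^k + ∑ j ∈ Finset.range k, ((D j : ℕ):ℝ)/3^(j+1), x.2/3^k) := by
  induction k generalizing x with
  | zero => simp [Fcomp]
  | succ k ih =>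
      have h3 : (3:ℝ)^k ≠ 0 := by positivity
      show Fcomp (Kf lam) D k (Kf lam (D k) x) = _
      rw [Kfd lam (D k) (hD k), ih, Finset.sum_range_succ, Prod.ext_iff]
      constructor <;> · simp only [pow_succ]; ring

lemma Fword_append {α : Type*} {N : ℕ} (F : Fin N → α → α) (w u : List (Fin N)) :
    Fword F (w ++ u) = Fword F w ∘ Fword F u := by
  induction w with
  | nil => rfl
  | cons i w ih => simp [Fword, ih, Function.comp_assoc]

lemma Fword_replicate {α : Type*} {N : ℕ} (F : Fin N → α → α) (i : Fin N) (k : ℕ) :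
    Fword F (List.replicate k i) = (F i)^[k] := by
  induction k with
  | zero => rfl
  | succ k ih =>
      rw [List.replicate_succ]
      show F i ∘ Fword F (List.replicate k i) = _
      rw [ih, Function.iterate_succ']

lemma Fword_range {α : Type*} {N : ℕ} (F : Fin N → α → α) (D : ℕ → Fin N) (k : ℕ) :
    Fword F ((List.range k).map D) = Fcomp F D k := by
  induction k with
  | zero => rfl
  | succ k ih =>
      rw [List.range_succ, List.map_append, Fword_append, ih]
      rfl

lemma cword_const (N : ℕ) (w : List (Fin N)) :
    cword (fun _ => (1/3:ℝ)) w = (1/3:ℝ)^w.length := by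
  simp [cword, List.map_const', List.prod_replicate]

/-- Numerator integers: `Ndig k = Σ_{i<k} l_{i+1} 3^{k-i-1}` as a rational. -/
def Ndig (dgt : ℕ → Fin 5) : ℕ → ℚ
  | 0 => 0
  | k+1 => 3 * Ndig dgt k + ((dgt k : ℕ) : ℚ)

/-- Partial sums `s_k = Σ_{j<k} l_{j+1} 3^{-(j+1)}` of `λ`. -/
def sS (dgt : ℕ → Fin 5) (k : ℕ) : ℝ := ∑ j ∈ Finset.range k, ((dgt j : ℕ):ℝ)/3^(j+1)

lemma NS (dgt : ℕ → Fin 5) (k : ℕ) : (3:ℝ)^k * sS dgt k = ((Ndig dgt k : ℚ) : ℝ) := by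
  induction k with
  | zero => simp [sS, Ndig]
  | succ k ih =>
      have h3 : (3:ℝ)^k ≠ 0 := by positivity
      rw [sS, Finset.sum_range_succ, ← sS]
      show (3:ℝ)^(k+1) * _ = ((3 * Ndig dgt k + ((dgt k : ℕ) : ℚ) : ℚ) : ℝ)
      push_cast
      rw [← ih, pow_succ]
      field_simp

lemma sum_shift (dgt : ℕ → Fin 5) (k n : ℕ) :
    ∑ j ∈ Finset.range n, ((dgt (k+j) : ℕ):ℝ)/3^(j+1) = 3^k * (sS dgt (k+n) - sS dgt k) := by
  induction n with
  | zero => simp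
  | succ n ih =>
      have h3a : (3:ℝ)^(k+n+1) ≠ 0 := by positivity
      have h3b : (3:ℝ)^(n+1) ≠ 0 := by positivity
      have h3c : (3:ℝ)^k ≠ 0 := by positivity
      rw [Finset.sum_range_succ, ih, show k+(n+1) = (k+n)+1 from rfl]
      simp only [sS, Finset.sum_range_succ]
      field_simp
      ring

lemma key_eq (lam : ℝ) (dgt : ℕ → Fin 5) (hdgt : ∀ j, (dgt j : ℕ) ≤ 2) (k : ℕ) (x : ℝ × ℝ) :
    Kf lam 4 ((Kf lam 3)^[k] x) =
      Kf lam 3 (Fcomp (Kf lam) dgt k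
        (x + (3^k*(lam - sS dgt k) - 1/2, -(Real.sqrt 3/2)))) := by
  have h3 : (3:ℝ)^k ≠ 0 := by positivity
  rw [iter3, fcompf lam dgt hdgt, Kf3, Kf4, Prod.ext_iff, ← sS]
  constructor <;> · simp only [Prod.fst_add, Prod.snd_add]; field_simp; ring

/-- **Appendix, Example 2.** Let `λ ∈ (0,1)` be irrational with ternary digits
`l_i ∈ {0,1,2}` (here `dgt i = l_{i+1}`), and let `K_λ` be the `λ`-gasket with
irrational moving slider. Then `K_λ` does not satisfy the finite neighboring type
property: the set of similitudes `h = F_w^{-1}∘F_u` (i.e. `F_w ∘ h = F_u`) with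
`F_wK_λ ∩ F_uK_λ ≠ ∅` and ratio `c_u/c_w ∈ (c_*, 1/c_*) = (1/3, 3)` is infinite.
In particular, `F_4F_3^kK_λ ∩ F_3F_{l_1}⋯F_{l_k}K_λ ≠ ∅` for every `k ≥ 0`, and the
similitudes `(F_3∘F_{l_1}∘⋯∘F_{l_k})^{-1}∘F_4∘F_3^k`, `k ≥ 0`, are pairwise distinct
translations. -/
theorem stmt18 (lam : ℝ) (h0 : 0 < lam) (h1 : lam < 1) (hirr : Irrational lam)
    (dgt : ℕ → Fin 5) (hdgt : ∀ i, (dgt i : ℕ) ≤ 2)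
    (hlam : lam = ∑' i : ℕ, ((dgt i : ℕ) : ℝ) / 3 ^ (i + 1))
    (K : Set (ℝ × ℝ)) (hKc : IsCompact K) (hKne : K.Nonempty)
    (hself : K = ⋃ i, Kf lam i '' K) :
    ({h : ℝ × ℝ → ℝ × ℝ | ∃ w u : List (Fin 5),
        Fword (Kf lam) w ∘ h = Fword (Kf lam) u ∧
        (Fword (Kf lam) w '' K ∩ Fword (Kf lam) u '' K).Nonempty ∧
        (1/3 : ℝ) < cword (fun _ => (1/3 : ℝ)) u / cword (fun _ => (1/3 : ℝ)) w ∧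
        cword (fun _ => (1/3 : ℝ)) u / cword (fun _ => (1/3 : ℝ)) w < 3}).Infinite ∧
    (∀ k : ℕ,
      ((Kf lam 4 '' ((Kf lam 3)^[k] '' K)) ∩
        (Kf lam 3 '' (Fcomp (Kf lam) dgt k '' K))).Nonempty) ∧
    (∃ t : ℕ → ℝ × ℝ, Function.Injective t ∧
      ∀ (k : ℕ) (x : ℝ × ℝ),
        Kf lam 4 ((Kf lam 3)^[k] x) = Kf lam 3 (Fcomp (Kf lam) dgt k (x + t k))) := by
  obtain ⟨p0, hp0⟩ := hKne
  -- the translation vectors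
  set t : ℕ → ℝ × ℝ :=
    fun k => (3^k*(lam - sS dgt k) - 1/2, -(Real.sqrt 3/2)) with ht
  have keyt : ∀ (k : ℕ) (x : ℝ × ℝ),
      Kf lam 4 ((Kf lam 3)^[k] x) = Kf lam 3 (Fcomp (Kf lam) dgt k (x + t k)) :=
    fun k x => key_eq lam dgt hdgt k x
  -- basic membership facts
  have hFK : ∀ i, Kf lam i '' K ⊆ K := fun i =>
    calc Kf lam i '' K ⊆ ⋃ i, Kf lam i '' K := subset_iUnion (fun i => Kf lam i '' K) i
      _ = K := hself.symm
  have memIter : ∀ n, ∀ p ∈ K, (Kf lam 3)^[n] p ∈ K := by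
    intro n
    induction n with
    | zero => intro p hp; exact hp
    | succ n ih =>
        intro p hp
        rw [Function.iterate_succ_apply]
        exact ih _ (hFK 3 ⟨p, hp, rfl⟩)
  have memFcomp : ∀ (D : ℕ → Fin 5) n, ∀ p ∈ K, Fcomp (Kf lam) D n p ∈ K := by
    intro D n
    induction n with
    | zero => intro p hp; exact hp
    | succ n ih =>
        intro p hp
        exact ih _ (hFK (D n) ⟨p, hp, rfl⟩)
  have hpow : Tendsto (fun n : ℕ => (1:ℝ)/3^n) atTop (𝓝 0) := by
    simpa [one_div_pow] using
      tendsto_pow_atTop_nhds_zero_of_lt_one (by norm_num : (0:ℝ) ≤ 1/3) (by norm_num)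
  -- the top vertex of the left subtriangle belongs to K
  have hp3K : (((1/2:ℝ), Real.sqrt 3/2) : ℝ × ℝ) ∈ K := by
    have heq : ∀ n : ℕ, (Kf lam 3)^[n] p0 =
        ((1:ℝ)/3^n) • p0 + (1 - (1:ℝ)/3^n) • (((1/2:ℝ), Real.sqrt 3/2) : ℝ × ℝ) := by
      intro n
      rw [iter3, Prod.ext_iff]
      constructor <;>
        · simp only [Prod.fst_add, Prod.snd_add, Prod.smul_fst, Prod.smul_snd, smul_eq_mul]
          ring
    have htend : Tendsto (fun n => (Kf lam 3)^[n] p0) atTop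
        (𝓝 (((1/2:ℝ), Real.sqrt 3/2) : ℝ × ℝ)) := by
      simp only [heq]
      have := (hpow.smul_const p0).add
        (((tendsto_const_nhds : Tendsto (fun _ : ℕ => (1:ℝ)) atTop (𝓝 1)).sub hpow).smul_const
          (((1/2:ℝ), Real.sqrt 3/2) : ℝ × ℝ))
      simpa using this
    exact hKc.isClosed.mem_of_tendsto htend (Eventually.of_forall fun n => memIter n p0 hp0)
  -- convergence of partial sums to lam
  have hsum : Summable (fun i : ℕ => ((dgt i : ℕ):ℝ)/3^(i+1)) := by
    apply Summable.of_nonneg_of_le (fun i => by positivity)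
      (fun i => ?_) (summable_geometric_of_lt_one (by norm_num) (by norm_num) :
        Summable fun i : ℕ => ((1:ℝ)/3)^i)
    have hd : ((dgt i : ℕ):ℝ) ≤ 2 := by exact_mod_cast hdgt i
    rw [div_le_iff₀ (by positivity)]
    have e : ((1:ℝ)/3)^i * 3^(i+1) = 3 := by
      rw [one_div, inv_pow, pow_succ]
      field_simp
    rw [e]
    linarith
  have hhs : HasSum (fun i : ℕ => ((dgt i : ℕ):ℝ)/3^(i+1)) lam := by
    rw [hlam]; exact hsum.hasSum
  have hs_tend : Tendsto (sS dgt) atTop (𝓝 lam) := hhs.tendsto_sum_nat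
  -- the point (λ_k, 0) belongs to K
  have hLkK : ∀ k : ℕ, ((3^k*(lam - sS dgt k), (0:ℝ)) : ℝ × ℝ) ∈ K := by
    intro k
    have hL : Tendsto (fun n => ∑ j ∈ Finset.range n, ((dgt (k+j) : ℕ):ℝ)/3^(j+1))
        atTop (𝓝 (3^k * (lam - sS dgt k))) := by
      simp only [sum_shift]
      have h1 : Tendsto (fun n => sS dgt (k+n)) atTop (𝓝 lam) := by
        have := hs_tend.comp (tendsto_add_atTop_nat k)
        simpa [Function.comp_def, add_comm] using this
      exact (h1.sub_const (sS dgt k)).const_mul _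
    have hD : ∀ j, ((dgt (k+j) : Fin 5) : ℕ) ≤ 2 := fun j => hdgt _
    have heq : ∀ n : ℕ, Fcomp (Kf lam) (fun j => dgt (k+j)) n p0 =
        ((1:ℝ)/3^n) • p0 +
          ((∑ j ∈ Finset.range n, ((dgt (k+j) : ℕ):ℝ)/3^(j+1), (0:ℝ)) : ℝ × ℝ) := by
      intro n
      rw [fcompf lam _ hD, Prod.ext_iff]
      constructor <;>
        · simp only [Prod.fst_add, Prod.snd_add, Prod.smul_fst, Prod.smul_snd, smul_eq_mul]
          ring
    have htend : Tendsto (fun n => Fcomp (Kf lam) (fun j => dgt (k+j)) n p0) atTop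
        (𝓝 ((3^k*(lam - sS dgt k), (0:ℝ)) : ℝ × ℝ)) := by
      simp only [heq]
      have := (hpow.smul_const p0).add
        (hL.prodMk_nhds (tendsto_const_nhds : Tendsto (fun _ : ℕ => (0:ℝ)) atTop (𝓝 0)))
      simpa using this
    exact hKc.isClosed.mem_of_tendsto htend
      (Eventually.of_forall fun n => memFcomp _ n p0 hp0)
  -- injectivity of the translations
  have hpowinj : Function.Injective (fun k : ℕ => (3:ℝ)^k) := by
    have hm : StrictMono (fun k : ℕ => (3:ℝ)^k) :=
      fun a b h => pow_lt_pow_right₀ (by norm_num) h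
    exact hm.injective
  have tinj : Function.Injective t := by
    intro a b hab
    by_contra hne
    rw [ht, Prod.mk.injEq] at hab
    have hab1 : (3:ℝ)^a * (lam - sS dgt a) = 3^b * (lam - sS dgt b) := by linarith [hab.1]
    have ha : (3:ℝ)^a * (lam - sS dgt a) = 3^a * lam - ((Ndig dgt a : ℚ):ℝ) := by
      rw [mul_sub, NS]
    have hb : (3:ℝ)^b * (lam - sS dgt b) = 3^b * lam - ((Ndig dgt b : ℚ):ℝ) := by
      rw [mul_sub, NS]
    rw [ha, hb] at hab1
    have h3ne : (3:ℝ)^a - (3:ℝ)^b ≠ 0 := sub_ne_zero.mpr (fun h => hne (hpowinj h))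
    refine hirr ⟨(Ndig dgt a - Ndig dgt b) / ((3:ℚ)^a - 3^b), ?_⟩
    push_cast
    rw [div_eq_iff (by exact_mod_cast h3ne)]
    linarith
  -- the common point
  have hpt : ∀ k : ℕ, (((1/2:ℝ), Real.sqrt 3/2) : ℝ × ℝ) + t k =
      ((3^k*(lam - sS dgt k), (0:ℝ)) : ℝ × ℝ) := by
    intro k
    rw [ht, Prod.ext_iff]
    constructor <;>
      · simp only [Prod.fst_add, Prod.snd_add]
        ring
  have bullet2 : ∀ k : ℕ,
      ((Kf lam 4 '' ((Kf lam 3)^[k] '' K)) ∩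
        (Kf lam 3 '' (Fcomp (Kf lam) dgt k '' K))).Nonempty := by
    intro k
    refine ⟨Kf lam 4 ((Kf lam 3)^[k] (((1/2:ℝ), Real.sqrt 3/2) : ℝ × ℝ)), ?_, ?_⟩
    · exact mem_image_of_mem _ (mem_image_of_mem _ hp3K)
    · rw [keyt k, hpt k]
      exact mem_image_of_mem _ (mem_image_of_mem _ (hLkK k))
  refine ⟨?_, bullet2, ⟨t, tinj, keyt⟩⟩
  apply Set.infinite_of_injective_forall_mem
    (f := fun k : ℕ => fun x : ℝ × ℝ => x + t k)
  · intro a b hab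
    apply tinj
    have := congrFun hab 0
    simpa using this
  · intro k
    refine ⟨(3 : Fin 5) :: (List.range k).map dgt,
      (4 : Fin 5) :: List.replicate k (3 : Fin 5), ?_, ?_, ?_, ?_⟩
    · funext x
      show Kf lam 3 (Fword (Kf lam) ((List.range k).map dgt) (x + t k)) =
        Kf lam 4 (Fword (Kf lam) (List.replicate k (3 : Fin 5)) x)
      rw [Fword_range, Fword_replicate]
      exact (keyt k x).symm
    · have e1 : Fword (Kf lam) ((3 : Fin 5) :: (List.range k).map dgt) '' K =
          Kf lam 3 '' (Fcomp (Kf lam) dgt k '' K) := by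
        show (Kf lam 3 ∘ Fword (Kf lam) ((List.range k).map dgt)) '' K = _
        rw [Fword_range, image_comp]
      have e2 : Fword (Kf lam) ((4 : Fin 5) :: List.replicate k (3 : Fin 5)) '' K =
          Kf lam 4 '' ((Kf lam 3)^[k] '' K) := by
        show (Kf lam 4 ∘ Fword (Kf lam) (List.replicate k (3 : Fin 5))) '' K = _
        rw [Fword_replicate, image_comp]
      rw [e1, e2, Set.inter_comm]
      exact bullet2 k
    · rw [cword_const, cword_const]
      simp only [List.length_cons, List.length_map, List.length_range, List.length_replicate]
      rw [div_self (by positivity)]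
      norm_num
    · rw [cword_const, cword_const]
      simp only [List.length_cons, List.length_map, List.length_range, List.length_replicate]
      rw [div_self (by positivity)]
      norm_num
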